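/- Let α be a unitary on a Hilbert space K with distinguished unit vector 1 such that the eigenvectors {U_μ} of α (orthonormal, indexed by eigenvalues μ in a group H₁ ⊆ U(1)) span a closed subspace K₁, and suppose multiplication by any eigen-unitary preserves both K₁ and its orthogonal complement K₂. If U is a unit vector with α(U) = λU (λ an eigen-unitary), and the orthogonal decomposition U = U₁ + U₂ with U₁ ∈ K₁, U₂ ∈ K₂ has U₂ ≠ 0 and both components satisfy α(Uᵢ) = λUᵢ, then (by uniqueness of quasi-eigenvectors up to phase) U₁ = 0; i.e., U ∈ K₂ and hence U ⊥ every eigenvector of α. -/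

import Mathlib

open scoped ComplexInnerProductSpace

/-- Let `α` be a unitary on a Hilbert space `K`, `K₁` the closed span of the
eigen-unitaries, `L` (multiplication by an eigen-unitary `λ`) preserving `K₁` and `K₁ᗮ`.
Suppose quasi-eigenvectors of quasi-eigenvalue `λ` are unique up to a scalar.  If the unit
vector `U` satisfies `α U = L U` and its orthogonal decomposition `U = U₁ + U₂` (with
`U₁ ∈ K₁`, `U₂ ∈ K₁ᗮ`, `U₂ ≠ 0`) has `α U₁ = L U₁` and `α U₂ = L U₂`, then `U₁ = 0`;
hence `U ∈ K₁ᗮ` and `U` is orthogonal to every eigenvector of `α` (every vector of `K₁`). -/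
theorem stmt17 {K : Type*} [NormedAddCommGroup K] [InnerProductSpace ℂ K] [CompleteSpace K]
    (α L : K ≃ₗᵢ[ℂ] K) (one : K) (hone : ‖one‖ = 1)
    (herg : ∀ x : K, α x = x → ∃ c : ℂ, x = c • one)
    (K₁ : Submodule ℂ K)
    (hLK₁ : ∀ x ∈ K₁, L x ∈ K₁) (hLK₂ : ∀ x ∈ K₁ᗮ, L x ∈ K₁ᗮ)
    (huniq : ∀ x y : K, α x = L x → α y = L y → x ≠ 0 → ∃ c : ℂ, y = c • x)
    (U U₁ U₂ : K) (hUnorm : ‖U‖ = 1)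
    (hdec : U = U₁ + U₂) (hm₁ : U₁ ∈ K₁) (hm₂ : U₂ ∈ K₁ᗮ) (hU₂ : U₂ ≠ 0)
    (hαU : α U = L U) (hα₁ : α U₁ = L U₁) (hα₂ : α U₂ = L U₂) :
    U₁ = 0 ∧ U ∈ K₁ᗮ ∧ ∀ v ∈ K₁, (inner ℂ v U : ℂ) = 0 := by
  obtain ⟨c, hc⟩ := huniq U₂ U₁ hα₂ hα₁ hU₂
  have hU₁perp : U₁ ∈ K₁ᗮ := hc ▸ Submodule.smul_mem _ c hm₂
  have h0 : U₁ = 0 := by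
    have := hU₁perp U₁ hm₁
    rwa [inner_self_eq_zero] at this
  subst h0
  have hU : U ∈ K₁ᗮ := by rw [hdec, zero_add]; exact hm₂
  exact ⟨rfl, hU, fun v hv => hU v hv⟩
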